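/- The topological closure of G ≤ Aut(T) fails Property IP_k for every k ∈ ℕ if and only if the k-closures G^(k), k ∈ ℕ, are pairwise eventually distinct, i.e., the descending chain G^(1) ≥ G^(2) ≥ ... never stabilises. -/

import Mathlib

open SimpleGraph Set
open Topology Filter

variable {V : Type*}

/-- The _root_.ball of radius `k` about the vertex `v`, with respect to the path metric. -/
def _root_.ball (T : SimpleGraph V) (v : V) (k : ℕ) : Set V := {u | T.dist v u ≤ k}

/-- `g` fixes the vertex set `S` pointwise. -/
def Fixes {T : SimpleGraph V} (g : T ≃g T) (S : Set V) : Prop := ∀ u ∈ S, g u = u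

/-- The `k`-closure of a set `S` of automorphisms of `T`: all automorphisms that agree
with some element of `S` on every _root_.ball of radius `k`. -/
def kClosure (T : SimpleGraph V) (S : Set (T ≃g T)) (k : ℕ) : Set (T ≃g T) :=
  {x | ∀ v : V, ∃ g ∈ S, ∀ u ∈ _root_.ball T v k, g u = x u}

/-- A (non-empty) subtree of a tree, viewed as a geodesically convex set of vertices. -/
def IsSubtree (T : SimpleGraph V) (Y : Set V) : Prop :=
  Y.Nonempty ∧ ∀ u ∈ Y, ∀ v ∈ Y, ∀ w : V, T.dist u w + T.dist w v = T.dist u v → w ∈ Y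

/-- `G` stabilises the vertex set `Y` (setwise). -/
def Stabilizes {T : SimpleGraph V} (S : Set (T ≃g T)) (Y : Set V) : Prop :=
  ∀ g ∈ S, (fun u => g u) '' Y = Y

/-- The semi-tree `T_{(v,w)}`: the component of `w` after removing the edge pair
`{(v,w),(w,v)}`, i.e. the vertices strictly closer to `w` than to `v`. -/
def semiTree (T : SimpleGraph V) (v w : V) : Set V := {u | T.dist w u < T.dist v u}

/-- The permutation topology on `Aut(T)`: pointwise convergence on vertices. -/
instance autTopology (T : SimpleGraph V) : TopologicalSpace (T ≃g T) :=
  TopologicalSpace.induced (fun g => (g : V → V))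
    (@Pi.topologicalSpace V (fun _ => V) (fun _ => ⊥))

/-- Property `IP_k` for a set `S` of automorphisms of `T`: for every edge `(v,w)`, every
element of the pointwise fixator of `B(v,k) ∩ B(w,k)` in `S` decomposes as a product of
two such elements, the first fixing the semi-tree `T_{(v,w)}` pointwise and the second
fixing `T_{(w,v)}` pointwise. -/
def PropertyIPk (T : SimpleGraph V) (S : Set (T ≃g T)) (k : ℕ) : Prop :=
  ∀ v w : V, T.Adj v w → ∀ f ∈ S, Fixes f (_root_.ball T v k ∩ _root_.ball T w k) →
    ∃ f₁ ∈ S, ∃ f₂ ∈ S,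
      Fixes f₁ (_root_.ball T v k ∩ _root_.ball T w k) ∧ Fixes f₂ (_root_.ball T v k ∩ _root_.ball T w k) ∧
      Fixes f₁ (semiTree T v w) ∧ Fixes f₂ (semiTree T w v) ∧ f = f₁ * f₂

section TreeLemmas
variable {T : SimpleGraph V} (hT : T.IsTree)
include hT

lemma dist0 {u v : V} (h : T.dist u v = 0) : u = v :=
  (hT.1.dist_eq_zero_iff).mp h

lemma dtri (u v w : V) : T.dist u w ≤ T.dist u v + T.dist v w :=
  hT.1.dist_triangle

lemma dadj {u v : V} (h : T.Adj u v) : T.dist u v = 1 := by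
  have h1 : T.dist u v ≤ 1 := by simpa using SimpleGraph.dist_le (Walk.cons h Walk.nil)
  have h2 : T.dist u v ≠ 0 := fun h0 => h.ne (dist0 hT h0)
  omega

lemma isPath_of_length_eq_dist : ∀ {u v : V} (p : T.Walk u v),
    p.length = T.dist u v → p.IsPath := by
  classical
  intro u v p
  induction p with
  | nil => intro _; exact Walk.IsPath.nil
  | @cons u y v h q ih =>
    intro hl
    simp only [Walk.length_cons] at hl
    have hyv : T.dist y v = q.length := by
      have h1 : T.dist y v ≤ q.length := SimpleGraph.dist_le q
      have h2 : T.dist u v ≤ 1 + T.dist y v := by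
        calc T.dist u v ≤ T.dist u y + T.dist y v := dtri hT _ _ _
        _ ≤ 1 + T.dist y v := by
            have : T.dist u y ≤ 1 := by
              simpa using SimpleGraph.dist_le (Walk.cons h Walk.nil)
            omega
      omega
    have hq : q.IsPath := ih hyv.symm
    refine hq.cons ?_
    intro hu
    have h3 : T.dist y u ≤ (q.takeUntil u hu).length := SimpleGraph.dist_le _
    have h4 : T.dist u v ≤ (q.dropUntil u hu).length := SimpleGraph.dist_le _
    have h5 : (q.takeUntil u hu).length + (q.dropUntil u hu).length = q.length := by
      rw [← Walk.length_append, Walk.take_spec]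
    have h6 : T.dist y u ≠ 0 := by
      intro h0
      have : y = u := dist0 hT h0
      subst this
      omega
    omega

lemma length_of_isPath : ∀ {u v : V} (p : T.Walk u v), p.IsPath → p.length = T.dist u v := by
  intro u v p hp
  obtain ⟨q, hq⟩ := hT.1.exists_walk_length_eq_dist u v
  have hqp : q.IsPath := isPath_of_length_eq_dist hT q hq
  have : p = q := by
    have := hT.2.path_unique ⟨p, hp⟩ ⟨q, hqp⟩
    exact congrArg Subtype.val this
  rw [this, hq]

lemma between_of_mem_support {u v c : V} (p : T.Walk u v) (hp : p.length = T.dist u v)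
    (hc : c ∈ p.support) : T.dist u c + T.dist c v = T.dist u v := by
  classical
  have h3 : T.dist u c ≤ (p.takeUntil c hc).length := SimpleGraph.dist_le _
  have h4 : T.dist c v ≤ (p.dropUntil c hc).length := SimpleGraph.dist_le _
  have h5 : (p.takeUntil c hc).length + (p.dropUntil c hc).length = p.length := by
    rw [← Walk.length_append, Walk.take_spec]
  have h6 : T.dist u v ≤ T.dist u c + T.dist c v := dtri hT _ _ _
  omega

lemma dist_dichotomy {v w : V} (hvw : T.Adj v w) (u : V) :
    T.dist v u = T.dist w u + 1 ∨ T.dist w u = T.dist v u + 1 := by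
  have h1 : T.dist v u ≤ 1 + T.dist w u := by
    have := dtri hT v w u; have := dadj hT hvw; omega
  have h2 : T.dist w u ≤ 1 + T.dist v u := by
    have := dtri hT w v u; have := dadj hT hvw.symm; omega
  have hne : T.dist v u ≠ T.dist w u := by
    intro he
    obtain ⟨p, hp⟩ := hT.1.exists_walk_length_eq_dist v u
    obtain ⟨q, hq⟩ := hT.1.exists_walk_length_eq_dist w u
    have hpP : p.IsPath := isPath_of_length_eq_dist hT p hp
    have hqP : q.IsPath := isPath_of_length_eq_dist hT q hq
    have hw : w ∉ p.support := by
      intro hw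
      have := between_of_mem_support hT p hp hw
      have := dadj hT hvw
      omega
    have hcons : (Walk.cons hvw.symm p).IsPath := hpP.cons hw
    have heq := congrArg Subtype.val (hT.2.path_unique ⟨Walk.cons hvw.symm p, hcons⟩ ⟨q, hqP⟩)
    simp only at heq
    have hlen : (Walk.cons hvw.symm p).length = q.length := by rw [heq]
    simp only [Walk.length_cons] at hlen
    omega
  omega

lemma append_geodesics_isPath {u z x : V} (p : T.Walk u z) (q : T.Walk z x)
    (hp : p.length = T.dist u z) (hq : q.length = T.dist z x)
    (hsum : T.dist u z + T.dist z x = T.dist u x) : (p.append q).IsPath := by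
  have hpP := isPath_of_length_eq_dist hT p hp
  have hqP := isPath_of_length_eq_dist hT q hq
  rw [Walk.isPath_def, Walk.support_append, List.nodup_append]
  refine ⟨hpP.support_nodup, ?_, ?_⟩
  · have := hqP.support_nodup
    rw [q.support_eq_cons] at this
    exact this.of_cons
  · rintro c hcp _ hct rfl
    have hcq : c ∈ q.support := List.mem_of_mem_tail hct
    have h1 := between_of_mem_support hT p hp hcp
    have h2 := between_of_mem_support hT q hq hcq
    have h3 : T.dist u x ≤ T.dist u c + T.dist c x := dtri hT _ _ _
    have hzc : T.dist z c = 0 := by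
      have hcz : T.dist c z = 0 := by omega
      rw [SimpleGraph.dist_comm]; exact hcz
    have : z = c := dist0 hT hzc
    subst this
    have := hqP.support_nodup
    rw [q.support_eq_cons] at this
    exact (List.nodup_cons.mp this).1 hct

lemma tree_exists_between {u x : V} : ∀ (m : ℕ), m ≤ T.dist u x →
    ∃ z : V, T.dist u z = m ∧ T.dist u z + T.dist z x = T.dist u x := by
  intro m
  induction m with
  | zero =>
    intro _
    refine ⟨u, ?_, ?_⟩ <;> simp [SimpleGraph.dist_self]
  | succ m ih =>
    intro hm
    obtain ⟨z, hz1, hz2⟩ := ih (by omega)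
    have hzx : T.dist z x ≠ 0 := by omega
    obtain ⟨p, hp⟩ := hT.1.exists_walk_length_eq_dist z x
    cases p with
    | nil => simp [SimpleGraph.dist_self] at hp; omega
    | @cons _ y _ h q =>
      refine ⟨y, ?_, ?_⟩
      · have hyx : T.dist y x = q.length := by
          have h1 : T.dist y x ≤ q.length := SimpleGraph.dist_le q
          have h2 : T.dist z x ≤ 1 + T.dist y x := by
            have := dtri hT z y x; have := dadj hT h; omega
          simp only [Walk.length_cons] at hp
          omega
        have h3 : T.dist u y ≤ m + 1 := by
          have := dtri hT u z y; have := dadj hT h; omega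
        have h4 : T.dist u x ≤ T.dist u y + T.dist y x := dtri hT u y x
        simp only [Walk.length_cons] at hp
        omega
      · have hyx : T.dist y x = q.length := by
          have h1 : T.dist y x ≤ q.length := SimpleGraph.dist_le q
          have h2 : T.dist z x ≤ 1 + T.dist y x := by
            have := dtri hT z y x; have := dadj hT h; omega
          simp only [Walk.length_cons] at hp
          omega
        have h3 : T.dist u y ≤ m + 1 := by
          have := dtri hT u z y; have := dadj hT h; omega
        have h4 : T.dist u x ≤ T.dist u y + T.dist y x := dtri hT u y x
        simp only [Walk.length_cons] at hp
        omega

lemma between_unique {u x z z' : V} (h1 : T.dist u z + T.dist z x = T.dist u x)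
    (h2 : T.dist u z' + T.dist z' x = T.dist u x) (he : T.dist u z = T.dist u z') :
    z = z' := by
  obtain ⟨p₁, hp₁⟩ := hT.1.exists_walk_length_eq_dist u z
  obtain ⟨p₂, hp₂⟩ := hT.1.exists_walk_length_eq_dist z x
  obtain ⟨q₁, hq₁⟩ := hT.1.exists_walk_length_eq_dist u z'
  obtain ⟨q₂, hq₂⟩ := hT.1.exists_walk_length_eq_dist z' x
  have hP := append_geodesics_isPath hT p₁ p₂ hp₁ hp₂ h1
  have hQ := append_geodesics_isPath hT q₁ q₂ hq₁ hq₂ h2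
  have hPQ : p₁.append p₂ = q₁.append q₂ :=
    congrArg Subtype.val (hT.2.path_unique ⟨p₁.append p₂, hP⟩ ⟨q₁.append q₂, hQ⟩)
  have hzmem : z ∈ (q₁.append q₂).support := by
    rw [← hPQ, Walk.mem_support_append_iff]
    left; exact Walk.end_mem_support p₁
  rw [Walk.mem_support_append_iff] at hzmem
  rcases hzmem with hz | hz
  · have := between_of_mem_support hT q₁ hq₁ hz
    have h3 : T.dist z' z = 0 := by
      have : T.dist z z' = 0 := by omega
      rwa [SimpleGraph.dist_comm] at this
    exact (dist0 hT h3).symm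
  · have := between_of_mem_support hT q₂ hq₂ hz
    have h4 : T.dist u x ≤ T.dist u z' + (T.dist z' z + T.dist z x) := by
      have t1 : T.dist u x ≤ T.dist u z' + T.dist z' x := dtri hT _ _ _
      omega
    have h5 : T.dist z' z = 0 := by omega
    exact (dist0 hT h5).symm

omit hT in
lemma mem_semiTree {v w u : V} : u ∈ semiTree T v w ↔ T.dist w u < T.dist v u := Iff.rfl

lemma semiTree_iff {v w : V} (hvw : T.Adj v w) {u : V} :
    u ∈ semiTree T v w ↔ T.dist v u = T.dist w u + 1 := by
  rw [mem_semiTree]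
  rcases dist_dichotomy hT hvw u with h | h <;> omega

lemma side_total {v w : V} (hvw : T.Adj v w) (u : V) :
    u ∈ semiTree T v w ∨ u ∈ semiTree T w v := by
  rw [mem_semiTree, mem_semiTree]
  rcases dist_dichotomy hT hvw u with h | h <;> omega

omit hT in
lemma side_disjoint {v w u : V} (h1 : u ∈ semiTree T v w) (h2 : u ∈ semiTree T w v) : False := by
  rw [mem_semiTree] at h1 h2; omega

omit hT in
lemma w_mem_semiTree (v w : V) (h : T.dist w v ≠ 0) : w ∈ semiTree T v w := by
  rw [mem_semiTree, SimpleGraph.dist_self]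
  rw [SimpleGraph.dist_comm] at h
  omega

lemma side_convex {v w u z : V} (hvw : T.Adj v w) (hu : u ∈ semiTree T w v)
    (hz : T.dist u z + T.dist z v = T.dist u v) : z ∈ semiTree T w v := by
  have hu' : T.dist w u = T.dist v u + 1 := (semiTree_iff hT hvw.symm).mp hu
  rcases side_total hT hvw z with hzB | hzA
  · exfalso
    have hz' : T.dist v z = T.dist w z + 1 := (semiTree_iff hT hvw).mp hzB
    have t1 : T.dist w u ≤ T.dist w z + T.dist z u := dtri hT _ _ _
    have c1 : T.dist z u = T.dist u z := SimpleGraph.dist_comm ..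
    have c2 : T.dist z v = T.dist v z := SimpleGraph.dist_comm ..
    have c3 : T.dist u v = T.dist v u := SimpleGraph.dist_comm ..
    omega
  · exact hzA

lemma cross_edge {v w a b : V} (hvw : T.Adj v w) (hab : T.Adj a b)
    (ha : a ∈ semiTree T w v) (hb : b ∈ semiTree T v w) : a = v ∧ b = w := by
  have ha' : T.dist w a = T.dist v a + 1 := (semiTree_iff hT hvw.symm).mp ha
  have hb' : T.dist v b = T.dist w b + 1 := (semiTree_iff hT hvw).mp hb
  have hd : T.dist a b = 1 := dadj hT hab
  have hm : T.dist v a = T.dist w b := by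
    have t1 : T.dist w a ≤ T.dist w b + T.dist b a := dtri hT _ _ _
    have t2 : T.dist v b ≤ T.dist v a + T.dist a b := dtri hT _ _ _
    have c1 : T.dist b a = T.dist a b := SimpleGraph.dist_comm ..
    omega
  -- build the long path a → v → w → b
  obtain ⟨p, hp⟩ := hT.1.exists_walk_length_eq_dist a v
  obtain ⟨q, hq⟩ := hT.1.exists_walk_length_eq_dist w b
  have hpP := isPath_of_length_eq_dist hT p hp
  have hqP := isPath_of_length_eq_dist hT q hq
  have hpA : ∀ c ∈ p.support, c ∈ semiTree T w v := by
    intro c hc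
    exact side_convex hT hvw ha (between_of_mem_support hT p hp hc)
  have hqB : ∀ c ∈ q.support, c ∈ semiTree T v w := by
    intro c hc
    have hbet := between_of_mem_support hT q hq hc
    refine side_convex hT hvw.symm hb ?_
    have c1 : T.dist w b = T.dist b w := SimpleGraph.dist_comm ..
    have c2 : T.dist c b = T.dist b c := SimpleGraph.dist_comm ..
    have c3 : T.dist w c = T.dist c w := SimpleGraph.dist_comm ..
    omega
  -- the concatenated walk  a → v → w → b
  have hvA : v ∈ semiTree T w v := by
    rw [mem_semiTree, SimpleGraph.dist_self]
    have : T.dist w v ≠ 0 := fun h0 => hvw.ne' (dist0 hT h0)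
    omega
  have hcq : (Walk.cons hvw q).IsPath := by
    refine hqP.cons ?_
    intro hv
    exact side_disjoint (hqB v hv) hvA
  have hPath : (p.append (Walk.cons hvw q)).IsPath := by
    rw [Walk.isPath_def, Walk.support_append, List.nodup_append]
    refine ⟨hpP.support_nodup, ?_, ?_⟩
    · have := hcq.support_nodup
      rw [(Walk.cons hvw q).support_eq_cons] at this
      exact this.of_cons
    · rintro c hcp _ hct rfl
      rw [Walk.support_cons, List.tail_cons] at hct
      exact side_disjoint (hqB c hct) (hpA c hcp)
  have hshort : (Walk.cons hab Walk.nil).IsPath := by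
    simp [Walk.isPath_def, hab.ne]
  have heq := congrArg Subtype.val
    (hT.2.path_unique ⟨p.append (Walk.cons hvw q), hPath⟩ ⟨Walk.cons hab Walk.nil, hshort⟩)
  simp only at heq
  have hlen : (p.append (Walk.cons hvw q)).length = (Walk.cons hab Walk.nil).length := by
    rw [heq]
  rw [Walk.length_append, Walk.length_cons, Walk.length_cons, Walk.length_nil] at hlen
  have hma : T.dist v a = 0 := by omega
  have hmb : T.dist w b = 0 := by omega
  exact ⟨(dist0 hT hma).symm, (dist0 hT hmb).symm⟩

lemma cross_dist {v w u x : V} (hvw : T.Adj v w) (hu : u ∈ semiTree T w v)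
    (hx : x ∈ semiTree T v w) : T.dist u x = T.dist u v + 1 + T.dist w x := by
  have hle : T.dist u x ≤ T.dist u v + 1 + T.dist w x := by
    have t1 : T.dist u x ≤ T.dist u v + T.dist v x := dtri hT _ _ _
    have t2 : T.dist v x ≤ T.dist v w + T.dist w x := dtri hT _ _ _
    have := dadj hT hvw
    omega
  have key : ∀ (n : ℕ) (u : V), u ∈ semiTree T w v → ∀ (p : T.Walk u x),
      p.length = T.dist u x → p.length = n → T.dist u v + 1 + T.dist w x ≤ p.length := by
    intro n
    induction n with
    | zero =>
      intro u hu p hp hn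
      exfalso
      cases p with
      | nil => exact side_disjoint hx hu
      | cons h q => simp at hn
    | succ n ih =>
      intro u hu p hp hn
      cases p with
      | nil => exact absurd hu (fun h => side_disjoint hx h)
      | @cons _ y _ h q =>
        simp only [Walk.length_cons] at hp hn ⊢
        have hyx : T.dist y x = q.length := by
          have h1 : T.dist y x ≤ q.length := SimpleGraph.dist_le q
          have h2 : T.dist u x ≤ 1 + T.dist y x := by
            have := dtri hT u y x; have := dadj hT h; omega
          omega
        rcases side_total hT hvw y with hyB | hyA
        · obtain ⟨rfl, rfl⟩ := cross_edge hT hvw h hu hyB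
          rw [SimpleGraph.dist_self]
          omega
        · have := ih y hyA q hyx.symm (by omega)
          have h3 : T.dist u v ≤ T.dist u y + T.dist y v := dtri hT _ _ _
          have h4 : T.dist u y ≤ 1 := by
            have := dadj hT h; omega
          have c1 : T.dist y v = T.dist v y := SimpleGraph.dist_comm ..
          have c2 : T.dist v y ≤ T.dist y v := by omega
          omega
  obtain ⟨p, hp⟩ := hT.1.exists_walk_length_eq_dist u x
  have := key p.length u hu p hp rfl
  omega

lemma adj_of_dist_one {u v : V} (h : T.dist u v = 1) : T.Adj u v := by
  obtain ⟨p, hp⟩ := hT.1.exists_walk_length_eq_dist u v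
  rw [h] at hp
  cases p with
  | nil => simp at hp
  | @cons _ y _ e q =>
    cases q with
    | nil => exact e
    | cons e' q' => simp [Walk.length_cons] at hp

lemma iso_dist (f : T ≃g T) (u v : V) :
    T.dist (f u) (f v) = T.dist u v := by
  have key : ∀ (g : T ≃g T) (a b : V), T.dist (g a) (g b) ≤ T.dist a b := by
    intro g a b
    obtain ⟨p, hp⟩ := hT.1.exists_walk_length_eq_dist a b
    have := SimpleGraph.dist_le (p.map g.toHom)
    rwa [Walk.length_map, hp] at this
  refine le_antisymm (key f u v) ?_
  have := key f.symm (f u) (f v)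
  simpa using this

lemma side_mapsTo {v w : V} (f : T ≃g T) (hfv : f v = v) (hfw : f w = w)
    {u : V} (hu : u ∈ semiTree T v w) : f u ∈ semiTree T v w := by
  rw [mem_semiTree] at hu ⊢
  have h1 : T.dist w (f u) = T.dist w u := by
    conv_lhs => rw [← hfw]
    exact iso_dist hT f w u
  have h2 : T.dist v (f u) = T.dist v u := by
    conv_lhs => rw [← hfv]
    exact iso_dist hT f v u
  omega

lemma exists_glue {v w : V} (hvw : T.Adj v w) (f : T ≃g T) (hfv : f v = v) (hfw : f w = w) :
    ∃ f₂ : T ≃g T, (∀ u ∈ semiTree T v w, f₂ u = f u) ∧ (∀ u ∈ semiTree T w v, f₂ u = u) := by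
  classical
  have hfv' : f.symm v = v := by conv_lhs => rw [← hfv, f.symm_apply_apply]
  have hfw' : f.symm w = w := by conv_lhs => rw [← hfw, f.symm_apply_apply]
  set B := semiTree T v w with hB
  refine ⟨⟨⟨fun u => if u ∈ B then f u else u, fun u => if u ∈ B then f.symm u else u,
    ?_, ?_⟩, ?_⟩, ?_, ?_⟩
  · intro u
    by_cases hu : u ∈ B
    · have : f u ∈ B := side_mapsTo hT f hfv hfw hu
      simp [hu, this]
    · simp [hu]
  · intro u
    by_cases hu : u ∈ B
    · have : f.symm u ∈ B := side_mapsTo hT f.symm hfv' hfw' hu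
      simp [hu, this]
    · simp [hu]
  · -- map_rel_iff'
    intro a b
    simp only [Equiv.coe_fn_mk]
    by_cases ha : a ∈ B <;> by_cases hb : b ∈ B
    · simp only [ha, hb, if_pos]
      exact f.map_rel_iff
    · simp only [ha, hb, if_pos, if_neg, if_true]
      have hbA : b ∈ semiTree T w v := (side_total hT hvw b).resolve_left hb
      constructor
      · intro h
        obtain ⟨rfl, hfa⟩ := cross_edge hT hvw h.symm hbA (side_mapsTo hT f hfv hfw ha)
        have : a = w := by
          have := f.injective (hfa.trans hfw.symm)
          exact this
        subst this
        exact hvw.symm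
      · intro h
        obtain ⟨rfl, rfl⟩ := cross_edge hT hvw h.symm hbA ha
        rw [hfw]
        exact hvw.symm
    · simp only [ha, hb, if_pos, if_neg, if_true]
      have haA : a ∈ semiTree T w v := (side_total hT hvw a).resolve_left ha
      constructor
      · intro h
        obtain ⟨rfl, hfb⟩ := cross_edge hT hvw h haA (side_mapsTo hT f hfv hfw hb)
        have : b = w := f.injective (hfb.trans hfw.symm)
        subst this
        exact hvw
      · intro h
        obtain ⟨rfl, rfl⟩ := cross_edge hT hvw h haA hb
        rw [hfw]
        exact hvw
    · simp [ha, hb]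
  · intro u hu
    simp only [RelIso.coe_fn_mk, Equiv.coe_fn_mk]
    rw [if_pos hu]
  · intro u hu
    simp only [RelIso.coe_fn_mk, Equiv.coe_fn_mk]
    rw [if_neg (fun h => side_disjoint h hu)]

lemma ball_cross {v w u x : V} {k : ℕ} (hvw : T.Adj v w) (hu : u ∈ semiTree T w v)
    (hx : x ∈ semiTree T v w) (hd : T.dist u x ≤ k) :
    x ∈ _root_.ball T v k ∩ _root_.ball T w k := by
  have hcd := cross_dist hT hvw hu hx
  have hvx : T.dist v x = T.dist w x + 1 := (semiTree_iff hT hvw).mp hx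
  constructor <;> simp only [_root_.ball, Set.mem_setOf_eq] <;> omega

omit hT in
lemma iso_inv_fix {f : T ≃g T} {u : V} (h : f u = u) : f⁻¹ u = u := by
  conv_lhs => rw [← h]
  exact f.symm_apply_apply u

lemma kClosure_IP {S : Set (T ≃g T)} (hS1 : (1 : T ≃g T) ∈ S) {k : ℕ} (hk : 1 ≤ k) :
    PropertyIPk T (kClosure T S k) k := by
  intro v w hvw f hf hfix
  have hvball : v ∈ _root_.ball T v k ∩ _root_.ball T w k := by
    constructor <;> simp only [_root_.ball, Set.mem_setOf_eq]
    · simp [SimpleGraph.dist_self]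
    · rw [dadj hT hvw.symm]; omega
  have hwball : w ∈ _root_.ball T v k ∩ _root_.ball T w k := by
    constructor <;> simp only [_root_.ball, Set.mem_setOf_eq]
    · rw [dadj hT hvw]; omega
    · simp [SimpleGraph.dist_self]
  have hfv : f v = v := hfix v hvball
  have hfw : f w = w := hfix w hwball
  obtain ⟨f₂, hf₂B, hf₂A⟩ := exists_glue hT hvw f hfv hfw
  set A := semiTree T w v
  set B := semiTree T v w
  have hf₂invA : ∀ u ∈ A, f₂⁻¹ u = u := fun u hu => iso_inv_fix (hf₂A u hu)
  have hfsymm_side : ∀ u ∈ B, f.symm u ∈ B := by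
    intro u hu
    have hfv' : f.symm v = v := by conv_lhs => rw [← hfv, f.symm_apply_apply]
    have hfw' : f.symm w = w := by conv_lhs => rw [← hfw, f.symm_apply_apply]
    exact side_mapsTo hT f.symm hfv' hfw' hu
  have hf₂invB : ∀ u ∈ B, f₂⁻¹ u = f⁻¹ u := by
    intro u hu
    have h1 : f₂ (f.symm u) = u := by
      rw [hf₂B _ (hfsymm_side u hu)]
      exact f.apply_symm_apply u
    have h2 : f₂⁻¹ (f₂ (f.symm u)) = f₂⁻¹ u := by rw [h1]
    rw [f₂.inv_apply_self] at h2
    rw [← h2]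
    rfl
  refine ⟨f * f₂⁻¹, ?_, f₂, ?_, ?_, ?_, ?_, ?_, by group⟩
  · -- f₁ ∈ kClosure
    intro v₂
    rcases side_total hT hvw v₂ with hv₂B | hv₂A
    · refine ⟨1, hS1, ?_⟩
      intro u hu
      simp only [_root_.ball, Set.mem_setOf_eq] at hu
      rcases side_total hT hvw u with huB | huA
      · -- u ∈ B : f₁ fixes B
        rw [RelIso.mul_apply, hf₂invB u huB]
        simp [f.apply_symm_apply]
      · -- u ∈ A near v₂ ∈ B : u in both balls, f₁ u = f u = u
        have hub : u ∈ _root_.ball T v k ∩ _root_.ball T w k := by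
          have := ball_cross hT hvw.symm hv₂B huA hu
          exact ⟨this.2, this.1⟩
        rw [RelIso.mul_apply, hf₂invA u huA, hfix u hub]
        rfl
    · obtain ⟨g, hgS, hg⟩ := hf v₂
      refine ⟨g, hgS, ?_⟩
      intro u hu
      rw [hg u hu]
      simp only [_root_.ball, Set.mem_setOf_eq] at hu
      rcases side_total hT hvw u with huB | huA
      · have hub : u ∈ _root_.ball T v k ∩ _root_.ball T w k := ball_cross hT hvw hv₂A huB hu
        rw [RelIso.mul_apply, hf₂invB u huB, iso_inv_fix (hfix u hub), hfix u hub]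
      · rw [RelIso.mul_apply, hf₂invA u huA]
  · -- f₂ ∈ kClosure
    intro v₂
    rcases side_total hT hvw v₂ with hv₂B | hv₂A
    · obtain ⟨g, hgS, hg⟩ := hf v₂
      refine ⟨g, hgS, ?_⟩
      intro u hu
      rw [hg u hu]
      simp only [_root_.ball, Set.mem_setOf_eq] at hu
      rcases side_total hT hvw u with huB | huA
      · rw [hf₂B u huB]
      · have hub : u ∈ _root_.ball T v k ∩ _root_.ball T w k := by
          have := ball_cross hT hvw.symm hv₂B huA hu
          exact ⟨this.2, this.1⟩
        rw [hf₂A u huA, hfix u hub]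
    · refine ⟨1, hS1, ?_⟩
      intro u hu
      simp only [_root_.ball, Set.mem_setOf_eq] at hu
      rcases side_total hT hvw u with huB | huA
      · have hub : u ∈ _root_.ball T v k ∩ _root_.ball T w k := ball_cross hT hvw hv₂A huB hu
        rw [hf₂B u huB, hfix u hub]
        rfl
      · rw [hf₂A u huA]
        rfl
  · -- Fixes f₁ balls
    intro u hu
    rcases side_total hT hvw u with huB | huA
    · rw [RelIso.mul_apply, hf₂invB u huB]
      simp [f.apply_symm_apply]
    · rw [RelIso.mul_apply, hf₂invA u huA, hfix u hu]
  · -- Fixes f₂ balls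
    intro u hu
    rcases side_total hT hvw u with huB | huA
    · rw [hf₂B u huB, hfix u hu]
    · exact hf₂A u huA
  · -- Fixes f₁ B
    intro u hu
    rw [RelIso.mul_apply, hf₂invB u hu]
    simp [f.apply_symm_apply]
  · -- Fixes f₂ A
    exact hf₂A

lemma ball_finite (hlf : ∀ v : V, (T.neighborSet v).Finite)
    (v : V) (k : ℕ) : (_root_.ball T v k).Finite := by
  induction k with
  | zero =>
    refine Set.Finite.subset (Set.finite_singleton v) ?_
    intro u hu
    simp only [_root_.ball, Set.mem_setOf_eq, Nat.le_zero] at hu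
    simp [(hT.1.dist_eq_zero_iff.mp hu).symm]
  | succ k ih =>
    have hsub : _root_.ball T v (k+1) ⊆ _root_.ball T v k ∪ ⋃ x ∈ _root_.ball T v k, T.neighborSet x := by
      intro u hu
      simp only [_root_.ball, Set.mem_setOf_eq] at hu
      rcases le_or_gt (T.dist v u) k with h | h
      · exact Or.inl h
      · have hd : T.dist v u = k + 1 := by omega
        obtain ⟨p, hp⟩ := hT.1.exists_walk_length_eq_dist v u
        right
        -- penultimate vertex
        have hrev : ∃ y, T.Adj y u ∧ T.dist v y ≤ k := by
          cases hq : p.reverse with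
          | nil =>
            exfalso
            have := congrArg Walk.length hq
            simp [hp, hd] at this
            simp at hd
          | @cons _ y _ h q =>
            refine ⟨y, h.symm, ?_⟩
            have hlen : q.length = k := by
              have := congrArg Walk.length hq
              simp [hp, hd] at this
              omega
            have : T.dist u y ≤ 1 := by
              simpa using SimpleGraph.dist_le (Walk.cons h Walk.nil)
            have h2 : T.dist y v ≤ q.length := SimpleGraph.dist_le q
            calc T.dist v y = T.dist y v := SimpleGraph.dist_comm ..
            _ ≤ k := by omega
        obtain ⟨y, hy1, hy2⟩ := hrev
        exact Set.mem_biUnion hy2 hy1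
    exact Set.Finite.subset (ih.union (Set.Finite.biUnion ih (fun x _ => hlf x))) hsub

omit hT in
lemma finset_subset_ball (v₀ : V) (F : Finset V) : ∃ r : ℕ, ↑F ⊆ _root_.ball T v₀ r := by
  classical
  refine ⟨F.sup (fun u => T.dist v₀ u), ?_⟩
  intro u hu
  simp only [_root_.ball, Set.mem_setOf_eq]
  exact Finset.le_sup (by simpa using hu)

omit hT in
lemma mem_closure_iff_agree (S : Set (T ≃g T)) (x : T ≃g T) :
    x ∈ closure S ↔ ∀ F : Finset V, ∃ g ∈ S, ∀ v ∈ F, g v = x v := by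
  letI : TopologicalSpace V := ⊥
  haveI : DiscreteTopology V := ⟨rfl⟩
  have h1 : x ∈ closure S ↔
      (x : V → V) ∈ closure ((fun g : T ≃g T => (g : V → V)) '' S) := closure_induced
  rw [h1, mem_closure_iff_nhds]
  constructor
  · intro h F
    have hmem : (Set.pi ↑F (fun v => ({x v} : Set V))) ∈ 𝓝 (x : V → V) := by
      rw [nhds_pi]
      rw [Filter.mem_pi]
      refine ⟨↑F, F.finite_toSet, fun v => {x v}, ?_, subset_rfl⟩
      intro v
      simp [nhds_discrete]
    obtain ⟨y, hy1, hy2⟩ := h _ hmem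
    obtain ⟨g, hgS, hgy⟩ := hy2
    refine ⟨g, hgS, ?_⟩
    intro v hv
    have := hy1 v (by simpa using hv)
    rw [← hgy] at this
    simpa using this
  · intro h t ht
    rw [nhds_pi, Filter.mem_pi] at ht
    obtain ⟨I, hIfin, t', ht', hsub⟩ := ht
    obtain ⟨g, hgS, hg⟩ := h hIfin.toFinset
    refine ⟨(g : V → V), ?_, ⟨g, hgS, rfl⟩⟩
    apply hsub
    intro v hv
    have hx : x v ∈ t' v := by
      have := ht' v
      simpa [nhds_discrete] using this
    rw [hg v (by simpa using hv)]
    exact hx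

end TreeLemmas

section GroupLemmas
variable {T : SimpleGraph V} (G : Subgroup (T ≃g T))

lemma H_mul {a b : T ≃g T} (ha : a ∈ closure (G : Set (T ≃g T)))
    (hb : b ∈ closure (G : Set (T ≃g T))) : a * b ∈ closure (G : Set (T ≃g T)) := by
  classical
  rw [mem_closure_iff_agree] at ha hb ⊢
  intro F
  obtain ⟨g₂, hg₂S, hg₂⟩ := hb F
  obtain ⟨g₁, hg₁S, hg₁⟩ := ha (F.image (fun v => b v))
  refine ⟨g₁ * g₂, mul_mem hg₁S hg₂S, ?_⟩
  intro v hv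
  rw [RelIso.mul_apply, RelIso.mul_apply, hg₂ v hv, hg₁ (b v) (Finset.mem_image_of_mem _ hv)]

lemma H_inv {a : T ≃g T} (ha : a ∈ closure (G : Set (T ≃g T))) :
    a⁻¹ ∈ closure (G : Set (T ≃g T)) := by
  classical
  rw [mem_closure_iff_agree] at ha ⊢
  intro F
  obtain ⟨g, hgS, hg⟩ := ha (F.image (fun v => a⁻¹ v))
  refine ⟨g⁻¹, inv_mem hgS, ?_⟩
  intro v hv
  have h1 : g (a⁻¹ v) = a (a⁻¹ v) := hg _ (Finset.mem_image_of_mem _ hv)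
  have h2 : a (a⁻¹ v) = v := RelIso.apply_inv_self a v
  have : g⁻¹ (g (a⁻¹ v)) = a⁻¹ v := g.inv_apply_self _
  rw [h1, h2] at this
  exact this

end GroupLemmas

section Main
variable {T : SimpleGraph V} (hT : T.IsTree) (hlf : ∀ v : V, (T.neighborSet v).Finite)
  (G : Subgroup (T ≃g T))
include hT

lemma closure_subset_kClosure (hlf : ∀ v : V, (T.neighborSet v).Finite)
    (S : Set (T ≃g T)) (k : ℕ) : closure S ⊆ kClosure T S k := by
  intro x hx v
  rw [mem_closure_iff_agree] at hx
  obtain ⟨g, hgS, hg⟩ := hx (ball_finite hT hlf v k).toFinset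
  exact ⟨g, hgS, fun u hu => hg u ((ball_finite hT hlf v k).mem_toFinset.mpr hu)⟩

omit hT in
lemma kClosure_mono (S : Set (T ≃g T)) {k r : ℕ} (hkr : k ≤ r) :
    kClosure T S r ⊆ kClosure T S k := by
  intro x hx v
  obtain ⟨g, hgS, hg⟩ := hx v
  exact ⟨g, hgS, fun u hu => hg u (by simp only [_root_.ball, Set.mem_setOf_eq] at hu ⊢; omega)⟩

lemma mem_closure_of_forall_kClosure (S : Set (T ≃g T)) (x : T ≃g T)
    (h : ∀ r : ℕ, x ∈ kClosure T S r) : x ∈ closure S := by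
  rw [mem_closure_iff_agree]
  intro F
  have v₀ : V := hT.1.nonempty.some
  obtain ⟨r, hFr⟩ := finset_subset_ball (T := T) v₀ F
  obtain ⟨g, hgS, hg⟩ := h r v₀
  exact ⟨g, hgS, fun v hv => hg v (hFr hv)⟩

include hlf in
lemma crux {k : ℕ} (hk : 1 ≤ k) (hIP : PropertyIPk T (closure (G : Set (T ≃g T))) k) :
    kClosure T (G : Set (T ≃g T)) k ⊆ closure (G : Set (T ≃g T)) := by
  classical
  set S : Set (T ≃g T) := (G : Set (T ≃g T)) with hS
  intro x hx
  have v₀ : V := hT.1.nonempty.some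
  have main : ∀ m : ℕ, ∃ h ∈ closure S, ∀ u : V, T.dist v₀ u ≤ k + m → h u = x u := by
    intro m
    induction m with
    | zero =>
      obtain ⟨g, hgS, hg⟩ := hx v₀
      exact ⟨g, subset_closure hgS, fun u hu => hg u (by simpa [_root_.ball] using hu)⟩
    | succ m ih =>
      obtain ⟨h0, hH0, hag0⟩ := ih
      have hBfin : ({b : V | T.dist v₀ b = m + 1}).Finite :=
        Set.Finite.subset (ball_finite hT hlf v₀ (m+1))
          (fun b hb => by simp only [_root_.ball, Set.mem_setOf_eq] at *; omega)
      have claim : ∀ (Fb : Finset V), ↑Fb ⊆ {b : V | T.dist v₀ b = m + 1} →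
          ∃ h ∈ closure S, (∀ u : V, T.dist v₀ u ≤ k + m → h u = x u) ∧
            (∀ b ∈ Fb, ∀ u : V, T.dist v₀ u = (m + 1) + T.dist b u →
              T.dist v₀ u ≤ k + m + 1 → h u = x u) := by
        intro Fb
        induction Fb using Finset.induction with
        | empty => exact fun _ => ⟨h0, hH0, hag0, by simp⟩
        | @insert b Fb hbFb ih2 =>
          intro hsub
          obtain ⟨h, hH, hinv1, hinv2⟩ := ih2 (fun b' hb' => hsub (Finset.mem_insert_of_mem hb'))
          have hbdist : T.dist v₀ b = m + 1 := hsub (Finset.mem_insert_self b Fb)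
          obtain ⟨a, ha1, ha2⟩ := tree_exists_between hT (u := v₀) (x := b) m (by omega)
          have hab : T.Adj a b := adj_of_dist_one hT (by omega)
          have hv₀A : v₀ ∈ semiTree T b a := by
            rw [semiTree_iff hT hab.symm]
            have c1 : T.dist b v₀ = T.dist v₀ b := SimpleGraph.dist_comm ..
            have c2 : T.dist a v₀ = T.dist v₀ a := SimpleGraph.dist_comm ..
            omega
          have hBranch : ∀ u : V, T.dist v₀ u = (m + 1) + T.dist b u ↔ u ∈ semiTree T a b := by
            intro u
            constructor
            · intro hf
              rw [semiTree_iff hT hab]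
              have t1 : T.dist a u ≤ T.dist a b + T.dist b u := dtri hT _ _ _
              have t2 : T.dist v₀ u ≤ T.dist v₀ a + T.dist a u := dtri hT _ _ _
              have := dadj hT hab
              omega
            · intro hu
              have := cross_dist hT hab hv₀A hu
              have c1 : T.dist v₀ a = T.dist a v₀ := SimpleGraph.dist_comm ..
              omega
          obtain ⟨g, hgS, hg⟩ := hx b
          have tH : h⁻¹ * g ∈ closure S := H_mul G (H_inv G hH) (subset_closure hgS)
          set t : T ≃g T := h⁻¹ * g with ht
          have htu : ∀ u : V, t u = h⁻¹ (g u) := fun u => rfl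
          have tfix : Fixes t (_root_.ball T a k ∩ _root_.ball T b k) := by
            intro u hu
            obtain ⟨hu1, hu2⟩ := hu
            simp only [_root_.ball, Set.mem_setOf_eq] at hu1 hu2
            have hxu : h u = x u := by
              refine hinv1 u ?_
              have := dtri hT v₀ a u
              omega
            have hgu : g u = x u := hg u (by simpa [_root_.ball] using hu2)
            rw [htu, hgu, ← hxu, h.inv_apply_self]
          obtain ⟨t₁, ht₁H, t₂, ht₂H, ht₁fix, ht₂fix, ht₁B, ht₂A, hteq⟩ :=
            hIP a b hab t tH tfix
          have hta : t a = a := tfix a (by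
            constructor <;> simp only [_root_.ball, Set.mem_setOf_eq]
            · simp [SimpleGraph.dist_self]
            · rw [dadj hT hab.symm]; omega)
          have htb : t b = b := tfix b (by
            constructor <;> simp only [_root_.ball, Set.mem_setOf_eq]
            · rw [dadj hT hab]; omega
            · simp [SimpleGraph.dist_self])
          have htside : ∀ u ∈ semiTree T a b, t u ∈ semiTree T a b := by
            intro u hu
            have h1 : T.dist b (t u) = T.dist b u := by
              conv_lhs => rw [← htb]
              exact iso_dist hT t b u
            have h2 : T.dist a (t u) = T.dist a u := by
              conv_lhs => rw [← hta]
              exact iso_dist hT t a u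
            simp only [semiTree, Set.mem_setOf_eq] at hu ⊢
            omega
          have ht₂onB : ∀ u ∈ semiTree T a b, t₂ u = t u := by
            intro u hu
            have e1 : t u = t₁ (t₂ u) := by rw [hteq]; rfl
            have e2 : t₁ (t u) = t u := ht₁B (t u) (htside u hu)
            exact t₁.injective (by rw [← e1, e2])
          refine ⟨h * t₂, H_mul G hH ht₂H, ?_, ?_⟩
          · -- invariant 1
            intro u hu
            rcases side_total hT hab u with huB | huA
            · have hform : T.dist v₀ u = (m + 1) + T.dist b u := (hBranch u).mpr huB
              have hball : u ∈ _root_.ball T a k ∩ _root_.ball T b k := by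
                constructor <;> simp only [_root_.ball, Set.mem_setOf_eq]
                · have := dtri hT a b u
                  have := dadj hT hab
                  omega
                · omega
              rw [RelIso.mul_apply, ht₂fix u hball]
              exact hinv1 u hu
            · rw [RelIso.mul_apply, ht₂A u huA]
              exact hinv1 u hu
          · -- invariant 2 : all branches in insert b Fb
            intro b' hb' u hform hle
            rcases Finset.mem_insert.mp hb' with hEq | hb'Fb
            · -- the new branch
              rw [hEq] at hform
              have huB : u ∈ semiTree T a b := (hBranch u).mp hform
              rw [RelIso.mul_apply, ht₂onB u huB, htu]
              have hgu : g u = x u := hg u (by simp only [_root_.ball, Set.mem_setOf_eq]; omega)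
              rw [hgu]
              exact RelIso.apply_inv_self h (x u)
            · -- an old branch
              rcases side_total hT hab u with huB | huA
              · exfalso
                have hform2 : T.dist v₀ u = (m + 1) + T.dist b u := (hBranch u).mpr huB
                have hbb' : b = b' := by
                  refine between_unique hT (u := v₀) (x := u) (z := b) (z' := b') ?_ ?_ ?_
                  · omega
                  · have hd' : T.dist v₀ b' = m + 1 :=
                      hsub (Finset.mem_insert_of_mem hb'Fb)
                    omega
                  · have hd' : T.dist v₀ b' = m + 1 :=
                      hsub (Finset.mem_insert_of_mem hb'Fb)
                    omega
                exact hbFb (hbb' ▸ hb'Fb)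
              · rw [RelIso.mul_apply, ht₂A u huA]
                exact hinv2 b' hb'Fb u hform hle
      obtain ⟨h, hH, hinv1, hinv2⟩ := claim hBfin.toFinset (by simp)
      refine ⟨h, hH, ?_⟩
      intro u hu
      rcases le_or_gt (T.dist v₀ u) (k + m) with hle | hlt
      · exact hinv1 u hle
      · have hd : m + 1 ≤ T.dist v₀ u := by omega
        obtain ⟨b, hb1, hb2⟩ := tree_exists_between hT (m + 1) hd
        refine hinv2 b (hBfin.mem_toFinset.mpr hb1) u (by omega) hu
  rw [mem_closure_iff_agree]
  intro F
  obtain ⟨r, hFr⟩ := finset_subset_ball (T := T) v₀ F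
  obtain ⟨h, hH, hag⟩ := main r
  rw [mem_closure_iff_agree] at hH
  obtain ⟨g, hgS, hg⟩ := hH F
  refine ⟨g, hgS, fun v hv => ?_⟩
  have hvr : T.dist v₀ v ≤ k + r := by
    have := hFr hv
    simp only [_root_.ball, Set.mem_setOf_eq] at this
    omega
  rw [hg v hv, hag v hvr]

lemma IP0 (hIP : PropertyIPk T (closure (G : Set (T ≃g T))) 0) :
    ∀ f ∈ closure (G : Set (T ≃g T)), ∀ u : V, f u = u := by
  set H := closure (G : Set (T ≃g T)) with hH
  have claim : ∀ f ∈ H, ∀ v w : V, T.Adj v w → ∀ u ∈ semiTree T v w,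
      f u ∈ semiTree T v w := by
    intro f hf v w hvw u hu
    have hfix : Fixes f (_root_.ball T v 0 ∩ _root_.ball T w 0) := by
      intro z hz
      exfalso
      obtain ⟨h1, h2⟩ := hz
      simp only [_root_.ball, Set.mem_setOf_eq, Nat.le_zero] at h1 h2
      exact hvw.ne ((dist0 hT h1).trans (dist0 hT h2).symm)
      -- v = z = w contradiction
    obtain ⟨f₁, hf₁H, f₂, hf₂H, _, _, hf₁B, hf₂A, heq⟩ := hIP v w hvw f hf hfix
    have hf₂u : f₂ u ∈ semiTree T v w := by
      rcases side_total hT hvw (f₂ u) with hB | hA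
      · exact hB
      · exfalso
        have : f₂ (f₂ u) = f₂ u := hf₂A (f₂ u) hA
        have h2 : f₂ u = u := f₂.injective this
        rw [h2] at hA
        exact side_disjoint hu hA
    have : f u = f₁ (f₂ u) := by rw [heq]; rfl
    rw [this, hf₁B (f₂ u) hf₂u]
    exact hf₂u
  intro f hf u
  by_contra hne
  have hd : 1 ≤ T.dist u (f u) := by
    rcases Nat.eq_zero_or_pos (T.dist u (f u)) with h0 | h1
    · exact absurd (dist0 hT h0).symm hne
    · omega
  obtain ⟨z, hz1, hz2⟩ := tree_exists_between hT (u := u) (x := f u) 1 hd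
  have huz : T.Adj u z := adj_of_dist_one hT hz1
  have huS : u ∈ semiTree T z u := by
    simp only [semiTree, Set.mem_setOf_eq, SimpleGraph.dist_self]
    have c : T.dist z u = T.dist u z := SimpleGraph.dist_comm ..
    omega
  have hfu : f u ∈ semiTree T z u := claim f hf z u huz.symm u huS
  simp only [semiTree, Set.mem_setOf_eq] at hfu
  omega

end Main

/-- the closure of `G` fails Property `IP_k` for every `k` iff the
descending chain of `k`-closures of `G` never stabilises. -/
theorem closure_fails_IPk_iff_kClosures_never_stabilise (T : SimpleGraph V)
    (hT : T.IsTree) (hlf : ∀ v : V, (T.neighborSet v).Finite)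
    (G : Subgroup (T ≃g T)) :
    (∀ k : ℕ, ¬ PropertyIPk T (closure (G : Set (T ≃g T))) k) ↔
      ∀ k : ℕ, ∃ r : ℕ, k < r ∧
        kClosure T (G : Set (T ≃g T)) r ≠ kClosure T (G : Set (T ≃g T)) k := by
  set S : Set (T ≃g T) := (G : Set (T ≃g T)) with hS
  have h1S : (1 : T ≃g T) ∈ S := G.one_mem
  constructor
  · intro hfail k
    by_contra hstab
    push_neg at hstab
    have hstab' : ∀ r : ℕ, k < r → kClosure T S r = kClosure T S k := by
      intro r hr
      exact hstab r hr
    have heq : closure S = kClosure T S (k + 1) := by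
      apply Set.Subset.antisymm
      · exact closure_subset_kClosure hT hlf S (k + 1)
      · intro x hx
        apply mem_closure_of_forall_kClosure hT
        intro r
        rcases le_or_gt r (k + 1) with hle | hlt
        · exact kClosure_mono S hle hx
        · rw [hstab' r (by omega)]
          exact kClosure_mono S (by omega) hx
    have := kClosure_IP hT h1S (k := k + 1) (by omega)
    rw [← heq] at this
    exact hfail (k + 1) this
  · intro hchain k hIPk
    rcases Nat.eq_zero_or_pos k with rfl | hk
    · -- k = 0
      obtain ⟨r, hr, hne⟩ := hchain 0
      apply hne
      have htriv := IP0 hT G hIPk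
      apply Set.Subset.antisymm (kClosure_mono S (by omega))
      · intro x hx v
        have hxfix : ∀ v' : V, x v' = v' := by
          intro v'
          obtain ⟨g, hgS, hg⟩ := hx v'
          have h1 : g v' = x v' := hg v' (by simp [_root_.ball, SimpleGraph.dist_self])
          have h2 : g v' = v' := htriv g (subset_closure hgS) v'
          rw [← h1, h2]
        refine ⟨1, h1S, ?_⟩
        intro u _
        rw [hxfix u]
        rfl
    · -- k ≥ 1
      obtain ⟨r, hr, hne⟩ := hchain k
      apply hne
      apply Set.Subset.antisymm (kClosure_mono S (by omega))
      exact fun x hx => closure_subset_kClosure hT hlf S r (crux hT hlf G hk hIPk hx)
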